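/- Let d be even and 0 ≤ k ≤ d. The coefficient of x^{d/2} in (x−1)^k (x+1)^{d−k} equals 0 if k is odd, and equals (−1)^{k/2}·C(d, d/2)·C(d/2, k/2)/C(d, k) if k is even. -/

import Mathlib

open Polynomial

private lemma natDeg_Xs : ((X : ℚ[X]) - 1).natDegree ≤ 1 := by
  simpa using natDegree_X_sub_C_le (1:ℚ)

private lemma natDeg_Xa : ((X : ℚ[X]) + 1).natDegree ≤ 1 :=
  (natDegree_add_le _ _).trans (by simp)

private lemma reflect_Xs : reflect 1 ((X : ℚ[X]) - 1) = -((X : ℚ[X]) - 1) := by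
  ext n
  rw [coeff_reflect]
  rcases n with _ | _ | n
  · rw [revAt_le (by omega)]; simp [coeff_one]
  · rw [revAt_le (by omega)]; simp [coeff_one]
  · rw [revAt_eq_self_of_lt (by omega)]
    simp [coeff_one, coeff_X]

private lemma reflect_Xa : reflect 1 ((X : ℚ[X]) + 1) = ((X : ℚ[X]) + 1) := by
  ext n
  rw [coeff_reflect]
  rcases n with _ | _ | n
  · rw [revAt_le (by omega)]; simp [coeff_one]
  · rw [revAt_le (by omega)]; simp [coeff_one]
  · rw [revAt_eq_self_of_lt (by omega)]

private lemma reflect_Xs_pow (k : ℕ) :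
    reflect k (((X : ℚ[X]) - 1) ^ k) = (-1) ^ k * ((X : ℚ[X]) - 1) ^ k := by
  induction k with
  | zero => simp
  | succ n ih =>
    have h1 : (((X : ℚ[X]) - 1) ^ (n + 1)) = (X - 1) * (X - 1) ^ n := by ring
    rw [h1, show n + 1 = 1 + n from by omega,
      reflect_mul _ _ natDeg_Xs (natDegree_pow_le.trans (by simpa using Nat.mul_le_mul_left n natDeg_Xs)),
      reflect_Xs, ih]
    ring

private lemma reflect_Xa_pow (k : ℕ) :
    reflect k (((X : ℚ[X]) + 1) ^ k) = ((X : ℚ[X]) + 1) ^ k := by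
  induction k with
  | zero => simp
  | succ n ih =>
    have h1 : (((X : ℚ[X]) + 1) ^ (n + 1)) = (X + 1) * (X + 1) ^ n := by ring
    rw [h1, show n + 1 = 1 + n from by omega,
      reflect_mul _ _ natDeg_Xa (natDegree_pow_le.trans (by simpa using Nat.mul_le_mul_left n natDeg_Xa)),
      reflect_Xa, ih]

private lemma sym (d k j : ℕ) (hk : k ≤ d) (hj : j ≤ d) :
    (((X - 1) ^ k * (X + 1) ^ (d - k) : ℚ[X])).coeff (d - j) =
      (-1) ^ k * (((X - 1) ^ k * (X + 1) ^ (d - k) : ℚ[X])).coeff j := by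
  have hrefl : reflect d (((X - 1) ^ k * (X + 1) ^ (d - k) : ℚ[X])) =
      (-1) ^ k * ((X - 1) ^ k * (X + 1) ^ (d - k)) := by
    rw [show d = k + (d - k) from by omega,
      reflect_mul _ _ (natDegree_pow_le.trans (by simpa using Nat.mul_le_mul_left k natDeg_Xs))
        (natDegree_pow_le.trans (by simpa using Nat.mul_le_mul_left (d-k) natDeg_Xa)),
      Nat.add_sub_cancel_left, reflect_Xs_pow, reflect_Xa_pow]
    ring
  have := congrArg (fun p => p.coeff j) hrefl
  simp only [coeff_reflect] at this
  rw [revAt_le hj] at this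
  rw [show ((-1:ℚ[X])^k) = C ((-1:ℚ)^k) by simp] at this
  rw [coeff_C_mul] at this
  exact this

private lemma deriv_s (k : ℕ) :
    ((X : ℚ[X]) - 1) * derivative (((X : ℚ[X]) - 1) ^ k) = C (k : ℚ) * (X - 1) ^ k := by
  cases k with
  | zero => simp
  | succ n =>
    rw [derivative_pow]
    simp only [derivative_sub, derivative_X, derivative_one, sub_zero, mul_one,
      Nat.succ_sub_one, Nat.cast_add, Nat.cast_one]
    ring

private lemma deriv_a (k : ℕ) :
    ((X : ℚ[X]) + 1) * derivative (((X : ℚ[X]) + 1) ^ k) = C (k : ℚ) * (X + 1) ^ k := by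
  cases k with
  | zero => simp
  | succ n =>
    rw [derivative_pow]
    simp only [derivative_add, derivative_X, derivative_one, add_zero, mul_one,
      Nat.succ_sub_one, Nat.cast_add, Nat.cast_one]
    ring

private lemma ode (d k : ℕ) :
    ((X : ℚ[X]) ^ 2 - 1) * derivative ((X - 1) ^ k * (X + 1) ^ (d - k)) =
      (C (k : ℚ) * (X + 1) + C ((d - k : ℕ) : ℚ) * (X - 1)) *
        ((X - 1) ^ k * (X + 1) ^ (d - k)) := by
  rw [derivative_mul]
  have hA := deriv_s k
  have hB := deriv_a (d - k)
  linear_combination (((X : ℚ[X]) + 1) * (X + 1) ^ (d - k)) * hA +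
    (((X : ℚ[X]) - 1) * (X - 1) ^ k) * hB

private lemma coeffXX (q : ℚ[X]) (n : ℕ) :
    (((X : ℚ[X]) ^ 2 - 1) * q).coeff (n + 2) = q.coeff n - q.coeff (n + 2) := by
  rw [show ((X : ℚ[X]) ^ 2 - 1) * q = q * X ^ 2 - q from by ring, coeff_sub,
    coeff_mul_X_pow']
  simp

private lemma coeffRHS (a b : ℚ) (p : ℚ[X]) (n : ℕ) :
    ((C a * (X + 1) + C b * (X - 1)) * p).coeff (n + 1) =
      a * (p.coeff n + p.coeff (n + 1)) + b * (p.coeff n - p.coeff (n + 1)) := by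
  rw [show (C a * ((X : ℚ[X]) + 1) + C b * (X - 1)) * p
      = C a * (p * X) + C a * p + (C b * (p * X) - C b * p) from by ring]
  simp [coeff_add, coeff_sub, coeff_C_mul, coeff_mul_X]
  ring

private lemma c2a (p : ℚ[X]) (n : ℕ) :
    ((((X : ℚ[X]) + 1) ^ 2) * p).coeff (n + 2) =
      p.coeff n + 2 * p.coeff (n + 1) + p.coeff (n + 2) := by
  rw [show (((X : ℚ[X]) + 1) ^ 2) * p = p * X ^ 2 + ((p * X) + (p * X)) + p from by ring]
  simp [coeff_add, coeff_mul_X_pow', coeff_mul_X]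
  ring

private lemma c2s (p : ℚ[X]) (n : ℕ) :
    ((((X : ℚ[X]) - 1) ^ 2) * p).coeff (n + 2) =
      p.coeff n - 2 * p.coeff (n + 1) + p.coeff (n + 2) := by
  rw [show (((X : ℚ[X]) - 1) ^ 2) * p = p * X ^ 2 - ((p * X) + (p * X)) + p from by ring]
  simp [coeff_add, coeff_sub, coeff_mul_X_pow', coeff_mul_X]
  ring

private lemma ratio (m' k : ℕ) (hke : Even k) (hkd : k ≤ 2 * (m' + 2)) :
    ((m' : ℚ) + 3) * (((X - 1) ^ k * (X + 1) ^ (2 * (m' + 2) - k) : ℚ[X])).coeff (m' + 1) =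
      ((m' : ℚ) + 2 - k) * (((X - 1) ^ k * (X + 1) ^ (2 * (m' + 2) - k) : ℚ[X])).coeff (m' + 2) := by
  set P : ℚ[X] := (X - 1) ^ k * (X + 1) ^ (2 * (m' + 2) - k) with hP
  have hsym : P.coeff (m' + 3) = P.coeff (m' + 1) := by
    have hs := sym (2 * (m' + 2)) k (m' + 1) hkd (by omega)
    rw [show 2 * (m' + 2) - (m' + 1) = m' + 3 from by omega, hke.neg_one_pow, one_mul] at hs
    exact hs
  have hcm : (((X : ℚ[X]) ^ 2 - 1) * derivative P).coeff (m' + 2) =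
      ((C (k : ℚ) * (X + 1) + C ((2 * (m' + 2) - k : ℕ) : ℚ) * (X - 1)) * P).coeff (m' + 2) :=
    congrArg (fun q => q.coeff (m' + 2)) (ode (2 * (m' + 2)) k)
  rw [show m' + 2 = m' + 1 + 1 from by omega] at hcm
  rw [coeffRHS] at hcm
  rw [show m' + 1 + 1 = m' + 2 from by omega] at hcm
  rw [coeffXX] at hcm
  rw [coeff_derivative, coeff_derivative, hsym] at hcm
  have hcast : ((2 * (m' + 2) - k : ℕ) : ℚ) = 2 * ((m' : ℚ) + 2) - k := by
    rw [Nat.cast_sub hkd]; push_cast; ring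
  rw [hcast] at hcm
  push_cast at hcm
  linear_combination (-1/2 : ℚ) * hcm

private lemma step (m' k : ℕ) (hke : Even k) (hkd : k + 2 ≤ 2 * (m' + 2)) :
    (2 * ((m' : ℚ) + 2) - k - 1) *
        (((X - 1) ^ (k + 2) * (X + 1) ^ (2 * (m' + 2) - (k + 2)) : ℚ[X])).coeff (m' + 2) =
      -((k : ℚ) + 1) *
        (((X - 1) ^ k * (X + 1) ^ (2 * (m' + 2) - k) : ℚ[X])).coeff (m' + 2) := by
  set P : ℚ[X] := (X - 1) ^ k * (X + 1) ^ (2 * (m' + 2) - k) with hP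
  set Q : ℚ[X] := (X - 1) ^ (k + 2) * (X + 1) ^ (2 * (m' + 2) - (k + 2)) with hQ
  have hpq : ((X : ℚ[X]) + 1) ^ 2 * Q = ((X : ℚ[X]) - 1) ^ 2 * P := by
    rw [hP, hQ, show 2 * (m' + 2) - k = (2 * (m' + 2) - (k + 2)) + 2 from by omega]
    ring
  have hE : (((X : ℚ[X]) + 1) ^ 2 * Q).coeff (m' + 3) = (((X : ℚ[X]) - 1) ^ 2 * P).coeff (m' + 3) :=
    congrArg (fun q => q.coeff (m' + 3)) hpq
  rw [show m' + 3 = m' + 1 + 2 from by omega, c2a, c2s,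
    show m' + 1 + 1 = m' + 2 from by omega, show m' + 1 + 2 = m' + 3 from by omega] at hE
  have hsymP : P.coeff (m' + 3) = P.coeff (m' + 1) := by
    have hs := sym (2 * (m' + 2)) k (m' + 1) (by omega) (by omega)
    rw [show 2 * (m' + 2) - (m' + 1) = m' + 3 from by omega, hke.neg_one_pow, one_mul] at hs
    exact hs
  have hsymQ : Q.coeff (m' + 3) = Q.coeff (m' + 1) := by
    have hs := sym (2 * (m' + 2)) (k + 2) (m' + 1) (by omega) (by omega)
    rw [show 2 * (m' + 2) - (m' + 1) = m' + 3 from by omega,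
      (by exact hke.add (even_two) : Even (k + 2)).neg_one_pow, one_mul] at hs
    exact hs
  have hRP := ratio m' k hke (by omega)
  have hRQ := ratio m' (k + 2) (hke.add even_two) hkd
  rw [hsymP, hsymQ] at hE
  rw [← hP] at hRP
  rw [← hQ] at hRQ
  push_cast at hRQ hRP ⊢
  linear_combination (((m' : ℚ) + 3) / 2) * hE - hRQ + hRP

private lemma arith (M a : ℕ) (h : a + 1 ≤ M) :
    (2 * (M : ℚ) - 2 * a - 1) *
        ((-1) ^ (a + 1) * ((2 * M).choose M : ℚ) * (M.choose (a + 1) : ℚ) /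
          ((2 * M).choose (2 * a + 2) : ℚ)) =
      -(2 * (a : ℚ) + 1) *
        ((-1) ^ a * ((2 * M).choose M : ℚ) * (M.choose a : ℚ) / ((2 * M).choose (2 * a) : ℚ)) := by
  have hb : ((M.choose (a + 1)) : ℚ) * ((a : ℚ) + 1) = (M.choose a : ℚ) * ((M : ℚ) - a) := by
    have := Nat.choose_succ_right_eq M a
    have hc : ((M - a : ℕ) : ℚ) = (M : ℚ) - a := by
      rw [Nat.cast_sub (by omega)]
    calc ((M.choose (a + 1)) : ℚ) * ((a : ℚ) + 1)
        = ((M.choose (a + 1) * (a + 1) : ℕ) : ℚ) := by push_cast; ring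
      _ = ((M.choose a * (M - a) : ℕ) : ℚ) := by rw [this]
      _ = _ := by push_cast [hc]; ring
  have hc2 : (((2 * M).choose (2 * a + 2)) : ℚ) * (2 * (a : ℚ) + 2) =
      ((2 * M).choose (2 * a + 1) : ℚ) * (2 * (M : ℚ) - 2 * a - 1) := by
    have := Nat.choose_succ_right_eq (2 * M) (2 * a + 1)
    have hc : ((2 * M - (2 * a + 1) : ℕ) : ℚ) = 2 * (M : ℚ) - 2 * a - 1 := by
      rw [Nat.cast_sub (by omega)]; push_cast; ring
    calc (((2 * M).choose (2 * a + 2)) : ℚ) * (2 * (a : ℚ) + 2)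
        = (((2 * M).choose (2 * a + 1 + 1) * (2 * a + 1 + 1) : ℕ) : ℚ) := by push_cast; ring
      _ = (((2 * M).choose (2 * a + 1) * (2 * M - (2 * a + 1)) : ℕ) : ℚ) := by rw [this]
      _ = _ := by push_cast [hc]; ring
  have hc1 : (((2 * M).choose (2 * a + 1)) : ℚ) * (2 * (a : ℚ) + 1) =
      ((2 * M).choose (2 * a) : ℚ) * (2 * (M : ℚ) - 2 * a) := by
    have := Nat.choose_succ_right_eq (2 * M) (2 * a)
    have hc : ((2 * M - 2 * a : ℕ) : ℚ) = 2 * (M : ℚ) - 2 * a := by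
      rw [Nat.cast_sub (by omega)]; push_cast; ring
    calc (((2 * M).choose (2 * a + 1)) : ℚ) * (2 * (a : ℚ) + 1)
        = (((2 * M).choose (2 * a + 1) * (2 * a + 1) : ℕ) : ℚ) := by push_cast; ring
      _ = (((2 * M).choose (2 * a) * (2 * M - 2 * a) : ℕ) : ℚ) := by rw [this]
      _ = _ := by push_cast [hc]; ring
  have n0 : (((2 * M).choose (2 * a)) : ℚ) ≠ 0 := by
    exact_mod_cast Nat.cast_ne_zero.mpr (Nat.choose_pos (by omega)).ne'
  have n2 : (((2 * M).choose (2 * a + 2)) : ℚ) ≠ 0 := by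
    exact_mod_cast Nat.cast_ne_zero.mpr (Nat.choose_pos (by omega)).ne'
  have key : (((2 * M).choose (2 * a)) : ℚ) * ((2 * (M : ℚ) - 2 * a - 1) * (M.choose (a + 1) : ℚ))
      = ((2 * M).choose (2 * a + 2) : ℚ) * ((2 * (a : ℚ) + 1) * (M.choose a : ℚ)) := by
    apply mul_left_cancel₀ (show (2 * (a : ℚ) + 2) ≠ 0 by positivity)
    linear_combination (2 * (((2 * M).choose (2 * a)) : ℚ) * (2 * (M : ℚ) - 2 * a - 1)) * hb
      - ((2 * (a : ℚ) + 1) * (M.choose a : ℚ)) * hc2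
      - ((2 * (M : ℚ) - 2 * a - 1) * (M.choose a : ℚ)) * hc1
  rw [pow_succ]
  field_simp
  linear_combination (-((2 * M).choose M : ℚ)) * key

private lemma main (m' : ℕ) : ∀ a : ℕ, 2 * a ≤ 2 * (m' + 2) →
    (((X - 1) ^ (2 * a) * (X + 1) ^ (2 * (m' + 2) - 2 * a) : ℚ[X])).coeff (m' + 2) =
      (-1) ^ a * ((2 * (m' + 2)).choose (m' + 2) : ℚ) * ((m' + 2).choose a : ℚ) /
        ((2 * (m' + 2)).choose (2 * a) : ℚ) := by
  intro a
  induction a with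
  | zero =>
    intro _
    simp [coeff_X_add_one_pow]
  | succ n ih =>
    intro hle
    have hstep := step m' (2 * n) (even_two_mul n) (by omega)
    rw [show 2 * n + 2 = 2 * (n + 1) from by omega] at hstep
    rw [ih (by omega)] at hstep
    have har := arith (m' + 2) n (by omega)
    have hD : (2 * ((m' : ℚ) + 2) - 2 * n - 1) ≠ 0 := by
      have : (n : ℚ) ≤ (m' : ℚ) + 1 := by exact_mod_cast (by omega : n ≤ m' + 1)
      intro hc
      nlinarith
    rw [show 2 * (n + 1) = 2 * n + 2 from by omega] at hstep ⊢
    push_cast at hstep har ⊢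
    apply mul_left_cancel₀ hD
    linear_combination hstep - har

theorem stmt6 (d k : ℕ) (hd : Even d) (hk : k ≤ d) :
    (((X - 1) ^ k * (X + 1) ^ (d - k) : Polynomial ℚ)).coeff (d / 2) =
      if Odd k then 0
      else (-1) ^ (k / 2) * (d.choose (d / 2) : ℚ) * ((d / 2).choose (k / 2) : ℚ) /
        (d.choose k : ℚ) := by
  obtain ⟨m, rfl⟩ : ∃ m, d = 2 * m := by
    obtain ⟨m, hm⟩ := hd; exact ⟨m, by omega⟩
  rw [show 2 * m / 2 = m from by omega]
  by_cases hodd : Odd k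
  · rw [if_pos hodd]
    have hs := sym (2 * m) k m hk (by omega)
    rw [show 2 * m - m = m from by omega, hodd.neg_one_pow] at hs
    linarith
  · rw [if_neg hodd]
    obtain ⟨a, rfl⟩ : ∃ a, k = 2 * a := by
      obtain ⟨a, ha⟩ := Nat.not_odd_iff_even.mp hodd; exact ⟨a, by omega⟩
    rw [show 2 * a / 2 = a from by omega]
    match m, hk with
    | 0, hk =>
      have : a = 0 := by omega
      subst this
      simp
    | 1, hk =>
      have ha1 : a ≤ 1 := by omega
      interval_cases a
      · simp [coeff_X_add_one_pow]
      · rw [show ((X : ℚ[X]) - 1) ^ (2 * 1) * (X + 1) ^ (2 * 1 - 2 * 1)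
            = X ^ 2 - (X + X) + 1 from by ring]
        simp [coeff_one, coeff_X_pow]
        norm_num [Nat.choose]
    | (m'' + 2), hk =>
      exact main m'' a hk
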